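/- Expected Shortfall is subadditive on a finite equiprobable space: for all X, Y ∈ ℝ^m and τ ∈ {1,…,m}, ES_τ(X + Y) ≤ ES_τ(X) + ES_τ(Y), where ES_τ(Z) = −(δ/τ) Σ_{j=1}^τ Z̃_j and Z̃ denotes the increasing rearrangement of Z. -/
import Mathlib


open Finset

private lemma fin_strictMono_le {τ : ℕ} (g : Fin τ → ℕ) (hg : StrictMono g) :
    ∀ i : Fin τ, (i : ℕ) ≤ g i := by
  have key : ∀ k, ∀ i : Fin τ, (i : ℕ) = k → k ≤ g i := by
    intro k
    induction k with
    | zero => intro i _; exact Nat.zero_le _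
    | succ n ih =>
      intro i h
      have hn : n < τ := by omega
      have h1 : g ⟨n, hn⟩ < g i := hg (by simp [Fin.lt_def, h])
      have h2 : n ≤ g ⟨n, hn⟩ := ih ⟨n, hn⟩ rfl
      omega
  exact fun i => key (i : ℕ) i rfl

private lemma filter_eq_map {m τ : ℕ} (hτm : τ ≤ m) :
    Finset.univ.filter (fun j : Fin m => (j : ℕ) < τ)
      = Finset.univ.map (Fin.castLEEmb hτm) := by
  ext j
  simp only [mem_filter, mem_univ, true_and, mem_map, Fin.castLEEmb_apply]
  constructor
  · intro h
    exact ⟨⟨j.val, h⟩, by ext; simp⟩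
  · rintro ⟨i, -, rfl⟩
    exact i.isLt

private lemma filter_card {m τ : ℕ} (hτm : τ ≤ m) :
    (Finset.univ.filter (fun j : Fin m => (j : ℕ) < τ)).card = τ := by
  rw [filter_eq_map hτm, Finset.card_map, Finset.card_univ, Fintype.card_fin]

/-- The sum of the `τ` smallest values is at most the sum over any subset of size `τ`. -/
private lemma sorted_sum_le {m τ : ℕ} (hτm : τ ≤ m) (Z : Fin m → ℝ)
    (S : Finset (Fin m)) (hS : S.card = τ) :
    ∑ j ∈ Finset.univ.filter (fun j : Fin m => (j : ℕ) < τ), (Z ∘ Tuple.sort Z) j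
      ≤ ∑ j ∈ S, Z j := by
  classical
  set σ := Tuple.sort Z with hσ
  set f := Z ∘ σ with hf
  have hmono : Monotone f := Tuple.monotone_sort Z
  set T : Finset (Fin m) := S.map σ.symm.toEmbedding with hT
  have hTcard : T.card = τ := by simp [hT, hS]
  have hsumS : ∑ j ∈ S, Z j = ∑ i ∈ T, f i := by
    rw [hT, Finset.sum_map]
    simp [hf]
  rw [hsumS]
  set g := T.orderEmbOfFin hTcard with hg
  have hTmap : T = Finset.univ.map g.toEmbedding := by
    ext a
    simp only [mem_map, mem_univ, true_and, RelEmbedding.coe_toEmbedding]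
    constructor
    · intro ha
      have : a ∈ Set.range g := by
        rw [Finset.range_orderEmbOfFin]; exact ha
      obtain ⟨i, hi⟩ := this
      exact ⟨i, hi⟩
    · rintro ⟨i, rfl⟩
      exact Finset.orderEmbOfFin_mem T hTcard i
  rw [hTmap, Finset.sum_map, filter_eq_map hτm, Finset.sum_map]
  apply Finset.sum_le_sum
  intro i _
  apply hmono
  have hle : (i : ℕ) ≤ (g i : ℕ) := by
    apply fin_strictMono_le (fun i => ((g i : Fin m) : ℕ))
    exact fun a b hab => by exact_mod_cast g.strictMono hab
  simpa [Fin.le_def] using hle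

private lemma sorted_sum_superadd {m τ : ℕ} (hτm : τ ≤ m) (X Y : Fin m → ℝ) :
    (∑ j ∈ Finset.univ.filter (fun j : Fin m => (j : ℕ) < τ), (X ∘ Tuple.sort X) j)
      + (∑ j ∈ Finset.univ.filter (fun j : Fin m => (j : ℕ) < τ), (Y ∘ Tuple.sort Y) j)
      ≤ ∑ j ∈ Finset.univ.filter (fun j : Fin m => (j : ℕ) < τ),
          ((X + Y) ∘ Tuple.sort (X + Y)) j := by
  classical
  set σ := Tuple.sort (X + Y) with hσ
  set F := Finset.univ.filter (fun j : Fin m => (j : ℕ) < τ) with hF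
  set S : Finset (Fin m) := F.map σ.toEmbedding with hS
  have hScard : S.card = τ := by
    rw [hS, Finset.card_map, hF, filter_card hτm]
  have hXY : ∑ j ∈ F, ((X + Y) ∘ σ) j = ∑ j ∈ S, X j + ∑ j ∈ S, Y j := by
    rw [hS, Finset.sum_map, Finset.sum_map, ← Finset.sum_add_distrib]
    exact Finset.sum_congr rfl (fun j _ => by simp)
  rw [hXY]
  exact add_le_add (sorted_sum_le hτm X S hScard) (sorted_sum_le hτm Y S hScard)

/-- Subadditivity of Expected Shortfall on a finite equiprobable space. -/
theorem stmt_5 {m : ℕ} (δ : ℝ) (hδ : 0 < δ) (τ : ℕ) (hτ1 : 1 ≤ τ) (hτm : τ ≤ m)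
    (X Y : Fin m → ℝ) :
    -(δ / τ) * ∑ j ∈ Finset.univ.filter (fun j : Fin m => (j : ℕ) < τ),
        ((X + Y) ∘ Tuple.sort (X + Y)) j
      ≤ (-(δ / τ) * ∑ j ∈ Finset.univ.filter (fun j : Fin m => (j : ℕ) < τ),
          (X ∘ Tuple.sort X) j)
        + (-(δ / τ) * ∑ j ∈ Finset.univ.filter (fun j : Fin m => (j : ℕ) < τ),
            (Y ∘ Tuple.sort Y) j) := by
  have hc : (0:ℝ) < δ / τ := by
    apply div_pos hδ
    exact_mod_cast Nat.lt_of_lt_of_le Nat.zero_lt_one hτ1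
  have h := sorted_sum_superadd hτm X Y
  nlinarith [h, hc]
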